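/- Let a, x, y ∈ ℂ with a ≠ 0 and Re(a t x − y) > 0 for every t ∈ [0,1]. Then x · ∫_0^1 (t x − x) / (1 − e^{a t x − y}) dt = −(x/a) · log(1 − e^y) + (1/a²) · ( Li₂(e^{y − a x}) − Li₂(e^y) ), where log is the principal branch (note Re(1 − e^y) > 0 since |e^y| < 1 by the hypothesis at t = 0, and |e^{y − ax}| < 1 by the hypothesis at t = 1). -/

import Mathlib

open MeasureTheory Real Filter

/-- The dilogarithm `Li₂(w) = ∑_{j ≥ 1} w^j / j²`. -/
noncomputable def Li2 (w : ℂ) : ℂ := ∑' j : ℕ, w ^ (j + 1) / ((j : ℂ) + 1) ^ 2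

lemma my_norm_j1 (j : ℕ) : (1:ℝ) ≤ ‖(j : ℂ) + 1‖ := by
  rw [show ((j:ℂ)+1) = ((j+1 : ℕ) : ℂ) by push_cast; ring, Complex.norm_natCast]
  exact_mod_cast Nat.one_le_iff_ne_zero.mpr (Nat.succ_ne_zero j)

lemma my_summable_li2 {z : ℂ} (hz : ‖z‖ < 1) :
    Summable (fun j : ℕ => z ^ (j + 1) / ((j : ℂ) + 1) ^ 2) := by
  apply Summable.of_norm_bounded (summable_geometric_of_lt_one (norm_nonneg z) hz)
  intro j
  rw [norm_div, norm_pow, norm_pow]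
  have h1 : (1:ℝ) ≤ ‖(j : ℂ) + 1‖ ^ 2 := one_le_pow₀ (my_norm_j1 j)
  calc ‖z‖ ^ (j+1) / ‖(j : ℂ) + 1‖ ^ 2 ≤ ‖z‖ ^ (j+1) :=
        div_le_self (pow_nonneg (norm_nonneg z) _) h1
    _ ≤ ‖z‖ ^ j := by
        rw [pow_succ]
        nlinarith [pow_nonneg (norm_nonneg z) j, norm_nonneg z]

lemma my_hasSum_li2 {z : ℂ} (hz : ‖z‖ < 1) :
    HasSum (fun j : ℕ => z ^ (j + 1) / ((j : ℂ) + 1) ^ 2) (Li2 z) :=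
  (my_summable_li2 hz).hasSum

lemma my_hasSum_log {z : ℂ} (hz : ‖z‖ < 1) :
    HasSum (fun j : ℕ => z ^ (j + 1) / ((j : ℂ) + 1)) (-Complex.log (1 - z)) := by
  have H := Complex.hasSum_taylorSeries_neg_log hz
  have H2 : HasSum (fun j : ℕ => z ^ (j + 1) / ((j + 1 : ℕ) : ℂ)) (-Complex.log (1 - z)) := by
    refine (hasSum_nat_add_iff (f := fun n : ℕ => z ^ n / (n : ℂ)) 1).mpr ?_
    simpa using H
  convert H2 using 2 with j
  push_cast; ring

/-- FTC computation: `∫₀¹ (x - t x) e^{d - c t} dt`. -/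
lemma my_key_integral (c d x : ℂ) (hc : c ≠ 0) :
    ∫ t in (0:ℝ)..1, (x - (t:ℂ) * x) * Complex.exp (d - c * (t:ℂ)) =
      Complex.exp (d - c) * (x / c ^ 2) - Complex.exp d * (x / c ^ 2 - x / c) := by
  have key := intervalIntegral.integral_eq_sub_of_hasDerivAt (a := (0:ℝ)) (b := 1)
    (f := fun t : ℝ => Complex.exp (d - c * (t:ℂ)) * (x / c ^ 2 - x / c + (t:ℂ) * (x / c)))
    (f' := fun t : ℝ => (x - (t:ℂ) * x) * Complex.exp (d - c * (t:ℂ))) ?_ ?_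
  · rw [key]
    norm_num
  · intro t _
    have hts : HasDerivAt (fun s : ℝ => (s : ℂ)) 1 t := Complex.ofRealCLM.hasDerivAt
    have h1 : HasDerivAt (fun s : ℝ => d - c * (s:ℂ)) (-c) t := by
      simpa using (hts.const_mul c).const_sub d
    have h2 := h1.cexp
    have h3 : HasDerivAt (fun s : ℝ => x / c ^ 2 - x / c + (s:ℂ) * (x / c)) (x / c) t := by
      simpa using (hts.mul_const (x / c)).const_add (x / c ^ 2 - x / c)
    have h4 := h2.mul h3
    refine h4.congr_deriv ?_
    field_simp [hc]
    ring
  · apply Continuous.intervalIntegrable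
    fun_prop

lemma my_geom {w : ℂ} (ξ : ℂ) (hw : ‖w‖ < 1) :
    HasSum (fun j : ℕ => ξ * w ^ (j + 1)) (ξ * w * (1 - w)⁻¹) := by
  have H := (hasSum_geometric_of_norm_lt_one hw).mul_left (ξ * w)
  have hf : (fun j : ℕ => ξ * w ^ (j + 1)) = fun i => ξ * w * w ^ i :=
    funext fun j => by rw [pow_succ]; ring
  rw [hf]; exact H

lemma my_term (a x y : ℂ) (ha : a ≠ 0) (hx : x ≠ 0) (j : ℕ) :
    x * ∫ t in (0:ℝ)..1, (x - (t:ℂ) * x) * Complex.exp (y - a * (t:ℂ) * x) ^ (j + 1) =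
      (1 / a ^ 2) * (Complex.exp (y - a * x) ^ (j + 1) / ((j:ℂ) + 1) ^ 2)
        - (1 / a ^ 2) * (Complex.exp y ^ (j + 1) / ((j:ℂ) + 1) ^ 2)
        + (x / a) * (Complex.exp y ^ (j + 1) / ((j:ℂ) + 1)) := by
  have hm : ((j:ℂ) + 1) ≠ 0 := Nat.cast_add_one_ne_zero j
  have hc : ((j:ℂ) + 1) * a * x ≠ 0 := mul_ne_zero (mul_ne_zero hm ha) hx
  have hrw : ∀ t : ℝ, (x - (t:ℂ) * x) * Complex.exp (y - a * (t:ℂ) * x) ^ (j + 1)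
      = (x - (t:ℂ) * x) * Complex.exp (((j:ℂ)+1) * y - (((j:ℂ)+1) * a * x) * (t:ℂ)) := by
    intro t
    rw [← Complex.exp_nat_mul]
    congr 2
    push_cast; ring
  simp_rw [hrw]
  rw [my_key_integral _ _ _ hc]
  rw [show Complex.exp (y - a*x) ^ (j+1) = Complex.exp (((j:ℂ)+1) * (y - a*x)) by
        rw [← Complex.exp_nat_mul]; congr 1; push_cast; ring,
      show Complex.exp y ^ (j+1) = Complex.exp (((j:ℂ)+1) * y) by
        rw [← Complex.exp_nat_mul]; congr 1; push_cast; ring,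
      show ((j:ℂ)+1) * y - ((j:ℂ)+1) * a * x = ((j:ℂ)+1) * (y - a*x) by ring]
  field_simp
  ring

lemma my_div_inv (u w : ℂ) (hw0 : w ≠ 0) (h1w : (1:ℂ) - w ≠ 0) :
    u / (1 - w⁻¹) = -u * w * (1 - w)⁻¹ := by
  have h2 : (1:ℂ) - w⁻¹ ≠ 0 := by
    intro hcon
    apply h1w
    have h3 : w⁻¹ = 1 := by linear_combination -hcon
    have hw1 : w = 1 := by
      field_simp at h3
      exact h3.symm
    rw [hw1]; ring
  rw [div_eq_iff h2]
  field_simp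
  ring

theorem stmt14 (a x y : ℂ) (ha : a ≠ 0)
    (h : ∀ t : ℝ, t ∈ Set.Icc (0 : ℝ) 1 → 0 < (a * t * x - y).re) :
    (x * ∫ t in (0 : ℝ)..1, ((t : ℂ) * x - x) / (1 - Complex.exp (a * t * x - y))) =
      -(x / a) * Complex.log (1 - Complex.exp y) +
        (1 / a ^ 2) * (Li2 (Complex.exp (y - a * x)) - Li2 (Complex.exp y)) := by
  rcases eq_or_ne x 0 with hx | hx
  · simp [hx]
  -- notation
  set G : ℕ → ℝ → ℂ := fun j t => (x - (t:ℂ) * x) * Complex.exp (y - a * (t:ℂ) * x) ^ (j + 1)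
    with hG
  have hGc : ∀ j, Continuous (G j) := by
    intro j; rw [hG]; fun_prop
  -- uniform bound
  have hcont : Continuous fun t : ℝ => (a * (t:ℂ) * x - y).re := by fun_prop
  obtain ⟨t₀, ht₀, hmin⟩ := isCompact_Icc.exists_isMinOn (Set.nonempty_Icc.mpr zero_le_one)
    hcont.continuousOn
  set δ := (a * (t₀:ℂ) * x - y).re with hδdef
  have hδ : 0 < δ := h t₀ ht₀
  set r := Real.exp (-δ) with hrdef
  have hr1 : r < 1 := Real.exp_lt_one_iff.mpr (by linarith)
  have hr0 : (0:ℝ) ≤ r := (Real.exp_pos _).le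
  have hnorm_exp : ∀ t ∈ Set.Icc (0:ℝ) 1, ‖Complex.exp (y - a * (t:ℂ) * x)‖ ≤ r := by
    intro t ht
    rw [Complex.norm_exp]
    apply Real.exp_le_exp.mpr
    have : δ ≤ (a * (t:ℂ) * x - y).re := hmin ht
    have : (y - a * (t:ℂ) * x).re = -(a * (t:ℂ) * x - y).re := by
      rw [← Complex.neg_re, neg_sub]
    rw [this]
    linarith [hmin ht]
  have hbound : ∀ j, ∀ t ∈ Set.Icc (0:ℝ) 1, ‖G j t‖ ≤ ‖x‖ * r ^ j := by
    intro j t ht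
    rw [hG]
    simp only [norm_mul, norm_pow]
    have h1 : ‖x - (t:ℂ) * x‖ ≤ ‖x‖ := by
      have : x - (t:ℂ) * x = ((1 - t : ℝ) : ℂ) * x := by push_cast; ring
      rw [this, norm_mul, Complex.norm_real, Real.norm_eq_abs]
      rcases ht with ⟨ht0, ht1⟩
      nlinarith [norm_nonneg x, abs_of_nonneg (by linarith : (0:ℝ) ≤ 1 - t)]
    have h2 : ‖Complex.exp (y - a * (t:ℂ) * x)‖ ^ (j+1) ≤ r ^ j := by
      calc ‖Complex.exp (y - a * (t:ℂ) * x)‖ ^ (j+1) ≤ r ^ (j+1) :=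
            pow_le_pow_left₀ (norm_nonneg _) (hnorm_exp t ht) _
        _ ≤ r ^ j := by
            rw [pow_succ]
            nlinarith [pow_nonneg hr0 j]
    exact mul_le_mul h1 h2 (pow_nonneg (norm_nonneg _) _) (norm_nonneg x)
  -- integrability
  have hGint : ∀ j, IntegrableOn (G j) (Set.Ioc (0:ℝ) 1) := fun j =>
    (hGc j).integrableOn_Ioc
  have hsum_int : Summable fun j => ∫ t in Set.Ioc (0:ℝ) 1, ‖G j t‖ := by
    apply Summable.of_nonneg_of_le (fun j => integral_nonneg fun t => norm_nonneg _) ?_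
      ((summable_geometric_of_lt_one hr0 hr1).mul_left ‖x‖)
    intro j
    calc ∫ t in Set.Ioc (0:ℝ) 1, ‖G j t‖
        ≤ ∫ _t in Set.Ioc (0:ℝ) 1, ‖x‖ * r ^ j := by
          apply setIntegral_mono_on (hGint j).norm
            ((integrableOn_const_iff).mpr (Or.inr (by simp)))
            measurableSet_Ioc
          exact fun t ht => hbound j t (Set.Ioc_subset_Icc_self ht)
      _ = ‖x‖ * r ^ j := by simp [Real.volume_Ioc]
  -- pointwise series expansion
  have hpt : ∀ t ∈ Set.Ioc (0:ℝ) 1,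
      ((t:ℂ) * x - x) / (1 - Complex.exp (a * t * x - y)) = ∑' j, G j t := by
    intro t ht
    have htI := Set.Ioc_subset_Icc_self ht
    have hw : ‖Complex.exp (y - a * (t:ℂ) * x)‖ < 1 :=
      lt_of_le_of_lt (hnorm_exp t htI) hr1
    set w := Complex.exp (y - a * (t:ℂ) * x) with hwdef
    have hw0 : w ≠ 0 := Complex.exp_ne_zero _
    have h1w : (1:ℂ) - w ≠ 0 := by
      intro hcon
      rw [sub_eq_zero] at hcon
      rw [← hcon] at hw
      simp at hw
    have hS := (my_geom (x - (t:ℂ) * x) hw).tsum_eq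
    rw [hG]
    simp only []
    rw [show a * (t:ℂ) * x - y = -(y - a * (t:ℂ) * x) by ring, Complex.exp_neg, ← hwdef, hS,
        show (x - (t:ℂ)*x) = -((t:ℂ)*x - x) by ring]
    exact my_div_inv _ _ hw0 h1w
  -- swap integral and sum
  have hswap : (∫ t in (0:ℝ)..1, ((t:ℂ) * x - x) / (1 - Complex.exp (a * t * x - y)))
      = ∑' j, ∫ t in (0:ℝ)..1, G j t := by
    rw [intervalIntegral.integral_of_le zero_le_one,
        setIntegral_congr_fun measurableSet_Ioc hpt,
        ← integral_tsum_of_summable_integral_norm hGint hsum_int]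
    exact tsum_congr fun j => (intervalIntegral.integral_of_le zero_le_one).symm
  rw [hswap, ← tsum_mul_left]
  have hz1 : ‖Complex.exp (y - a * x)‖ < 1 := by
    rw [Complex.norm_exp]
    have := h 1 (by norm_num)
    apply Real.exp_lt_one_iff.mpr
    have : (y - a*x).re = -(a * ((1:ℝ):ℂ) * x - y).re := by
      rw [← Complex.neg_re, neg_sub]; norm_num
    rw [this]
    linarith [h 1 (by norm_num : (1:ℝ) ∈ Set.Icc (0:ℝ) 1)]
  have hz2 : ‖Complex.exp y‖ < 1 := by
    rw [Complex.norm_exp]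
    apply Real.exp_lt_one_iff.mpr
    have := h 0 (by norm_num : (0:ℝ) ∈ Set.Icc (0:ℝ) 1)
    simp at this
    linarith
  have hcomb : HasSum (fun j : ℕ =>
      (1 / a ^ 2) * (Complex.exp (y - a * x) ^ (j + 1) / ((j:ℂ) + 1) ^ 2)
        - (1 / a ^ 2) * (Complex.exp y ^ (j + 1) / ((j:ℂ) + 1) ^ 2)
        + (x / a) * (Complex.exp y ^ (j + 1) / ((j:ℂ) + 1)))
      ((1 / a ^ 2) * Li2 (Complex.exp (y - a * x)) - (1 / a ^ 2) * Li2 (Complex.exp y)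
        + (x / a) * (-Complex.log (1 - Complex.exp y))) :=
    (((my_hasSum_li2 hz1).mul_left _).sub ((my_hasSum_li2 hz2).mul_left _)).add
      ((my_hasSum_log hz2).mul_left _)
  rw [tsum_congr fun j => my_term a x y ha hx j, hcomb.tsum_eq]
  try ring
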